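/- Define, for smooth functions A_1, A_2, E¹, E² with (A_1,A_2) ≠ 0 ≠ (E¹,E²), the quantities A_φ := √(A_1²+A_2²), E_φ := √((E¹)²+(E²)²), angles β, α by (A_1, A_2) = A_φ(cos β', sin β') rotated appropriately, and α + β similarly from (E¹,E²); set P^φ := 2E_φ cos α and P^β := 2A_φE_φ sin α. Then the 2-form dA_1∧dE¹ + dA_2∧dE² pulled back under this change of variables equals (1/2)(dA_φ∧dP^φ + dβ∧dP^β). -/

import Mathlib

noncomputable section

/-- Coordinates on ℝ⁴ are (A₁, A₂, E¹, E²) = (p 0, p 1, p 2, p 3). -/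
def Aφ (p : Fin 4 → ℝ) : ℝ := Real.sqrt (p 0 ^ 2 + p 1 ^ 2)

def Eφ (p : Fin 4 → ℝ) : ℝ := Real.sqrt (p 2 ^ 2 + p 3 ^ 2)

/-- P^φ = 2 E_φ cos α, with cos α = (A₁E¹ + A₂E²)/(A_φ E_φ). -/
def Pφ (p : Fin 4 → ℝ) : ℝ := 2 * (p 0 * p 2 + p 1 * p 3) / Aφ p

/-- P^β = 2 A_φ E_φ sin α, with sin α = (A₁E² − A₂E¹)/(A_φ E_φ). -/
def Pβ (p : Fin 4 → ℝ) : ℝ := 2 * (p 0 * p 3 - p 1 * p 2)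

set_option maxHeartbeats 1600000 in
/-- The canonical transformation to (A_φ, P^φ, β, P^β): on the open set where both pairs
(A₁,A₂) and (E¹,E²) are nonzero, and for any differentiable local determination β of the
gauge angle (so that Λ_φ^A = cos β Λ₁ + sin β Λ₂, i.e. cos β = −A₂/A_φ, sin β = A₁/A_φ),
the 2-form 2(dA₁∧dE¹ + dA₂∧dE²) equals dA_φ∧dP^φ + dβ∧dP^β, evaluated on any pair of
tangent vectors u, v. -/
theorem symplectic_form_identity (p : Fin 4 → ℝ)
    (hA : (p 0, p 1) ≠ 0) (hE : (p 2, p 3) ≠ 0)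
    (β : (Fin 4 → ℝ) → ℝ) (hβd : DifferentiableAt ℝ β p)
    (hβ : ∀ᶠ q in nhds p, Real.cos (β q) = -q 1 / Aφ q ∧ Real.sin (β q) = q 0 / Aφ q) :
    ∀ u v : Fin 4 → ℝ,
      2 * ((u 0 * v 2 - v 0 * u 2) + (u 1 * v 3 - v 1 * u 3)) =
        (fderiv ℝ Aφ p u * fderiv ℝ Pφ p v - fderiv ℝ Aφ p v * fderiv ℝ Pφ p u)
        + (fderiv ℝ β p u * fderiv ℝ Pβ p v - fderiv ℝ β p v * fderiv ℝ Pβ p u) := by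
  intro u v
  -- positivity of A₁² + A₂²
  have hs2 : 0 < p 0 ^ 2 + p 1 ^ 2 := by
    rcases (by simpa [Prod.ext_iff] using hA : ¬ (p 0 = 0 ∧ p 1 = 0)) with h
    rcases not_and_or.mp h with h0 | h1
    · have := sq_pos_of_ne_zero h0; nlinarith [sq_nonneg (p 1)]
    · have := sq_pos_of_ne_zero h1; nlinarith [sq_nonneg (p 0)]
  set r : ℝ := Real.sqrt (p 0 ^ 2 + p 1 ^ 2) with hrdef
  have hr : 0 < r := Real.sqrt_pos.mpr hs2
  have hr2 : r ^ 2 = p 0 ^ 2 + p 1 ^ 2 := Real.sq_sqrt hs2.le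
  have hAφp : Aφ p = r := rfl
  have hrne : r ≠ 0 := hr.ne'
  -- coordinate projections
  have h0 : HasFDerivAt (fun q : Fin 4 → ℝ => q 0)
      (ContinuousLinearMap.proj 0 : (Fin 4 → ℝ) →L[ℝ] ℝ) p :=
    (ContinuousLinearMap.proj (0 : Fin 4) : (Fin 4 → ℝ) →L[ℝ] ℝ).hasFDerivAt
  have h1 : HasFDerivAt (fun q : Fin 4 → ℝ => q 1)
      (ContinuousLinearMap.proj 1 : (Fin 4 → ℝ) →L[ℝ] ℝ) p :=
    (ContinuousLinearMap.proj (1 : Fin 4) : (Fin 4 → ℝ) →L[ℝ] ℝ).hasFDerivAt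
  have h2 : HasFDerivAt (fun q : Fin 4 → ℝ => q 2)
      (ContinuousLinearMap.proj 2 : (Fin 4 → ℝ) →L[ℝ] ℝ) p :=
    (ContinuousLinearMap.proj (2 : Fin 4) : (Fin 4 → ℝ) →L[ℝ] ℝ).hasFDerivAt
  have h3 : HasFDerivAt (fun q : Fin 4 → ℝ => q 3)
      (ContinuousLinearMap.proj 3 : (Fin 4 → ℝ) →L[ℝ] ℝ) p :=
    (ContinuousLinearMap.proj (3 : Fin 4) : (Fin 4 → ℝ) →L[ℝ] ℝ).hasFDerivAt
  -- derivative of q ↦ q0² + q1²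
  have hsq0 : HasFDerivAt (fun q : Fin 4 → ℝ => q 0 ^ 2)
      ((2 * p 0 ^ 1) • (ContinuousLinearMap.proj 0 : (Fin 4 → ℝ) →L[ℝ] ℝ)) p := by
    have := (hasDerivAt_pow 2 (p 0)).comp_hasFDerivAt p h0
    simpa [Function.comp_def] using this
  have hsq1 : HasFDerivAt (fun q : Fin 4 → ℝ => q 1 ^ 2)
      ((2 * p 1 ^ 1) • (ContinuousLinearMap.proj 1 : (Fin 4 → ℝ) →L[ℝ] ℝ)) p := by
    have := (hasDerivAt_pow 2 (p 1)).comp_hasFDerivAt p h1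
    simpa [Function.comp_def] using this
  have hS : HasFDerivAt (fun q : Fin 4 → ℝ => q 0 ^ 2 + q 1 ^ 2)
      ((2 * p 0 ^ 1) • (ContinuousLinearMap.proj 0 : (Fin 4 → ℝ) →L[ℝ] ℝ)
        + (2 * p 1 ^ 1) • (ContinuousLinearMap.proj 1 : (Fin 4 → ℝ) →L[ℝ] ℝ)) p :=
    hsq0.add hsq1
  -- derivative of Aφ
  have hAφ : HasFDerivAt Aφ ((1 / (2 * r)) •
      ((2 * p 0 ^ 1) • (ContinuousLinearMap.proj 0 : (Fin 4 → ℝ) →L[ℝ] ℝ)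
        + (2 * p 1 ^ 1) • (ContinuousLinearMap.proj 1 : (Fin 4 → ℝ) →L[ℝ] ℝ))) p := by
    have := hS.sqrt hs2.ne'
    exact this
  have hAval : ∀ w : Fin 4 → ℝ, fderiv ℝ Aφ p w = (p 0 * w 0 + p 1 * w 1) / r := by
    intro w
    rw [hAφ.fderiv]
    simp only [ContinuousLinearMap.add_apply, ContinuousLinearMap.sub_apply, ContinuousLinearMap.smul_apply, ContinuousLinearMap.neg_apply, ContinuousLinearMap.smulRight_apply, ContinuousLinearMap.proj_apply, smul_eq_mul, pow_one, hAφp]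
    field_simp
  have hAd : DifferentiableAt ℝ Aφ p := hAφ.differentiableAt
  -- derivative of Pφ
  have hN : HasFDerivAt (fun q : Fin 4 → ℝ => 2 * (q 0 * q 2 + q 1 * q 3))
      ((2 : ℝ) • ((p 0 • (ContinuousLinearMap.proj 2 : (Fin 4 → ℝ) →L[ℝ] ℝ)
          + p 2 • (ContinuousLinearMap.proj 0 : (Fin 4 → ℝ) →L[ℝ] ℝ))
        + (p 1 • (ContinuousLinearMap.proj 3 : (Fin 4 → ℝ) →L[ℝ] ℝ)
          + p 3 • (ContinuousLinearMap.proj 1 : (Fin 4 → ℝ) →L[ℝ] ℝ)))) p :=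
    ((h0.mul h2).add (h1.mul h3)).const_mul 2
  have hInv : HasFDerivAt (fun q : Fin 4 → ℝ => (Aφ q)⁻¹)
      ((-(r ^ 2)⁻¹) • ((1 / (2 * r)) •
        ((2 * p 0 ^ 1) • (ContinuousLinearMap.proj 0 : (Fin 4 → ℝ) →L[ℝ] ℝ)
          + (2 * p 1 ^ 1) • (ContinuousLinearMap.proj 1 : (Fin 4 → ℝ) →L[ℝ] ℝ)))) p :=
    (hasDerivAt_inv hr.ne').comp_hasFDerivAt p hAφ
  clear_value r
  have hPφeq : Pφ = fun q => (2 * (q 0 * q 2 + q 1 * q 3)) * (Aφ q)⁻¹ := by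
    funext q; rw [Pφ, div_eq_mul_inv]
  have hPφ := hN.mul hInv
  have hPval : ∀ w : Fin 4 → ℝ, fderiv ℝ Pφ p w =
      2 * (w 0 * p 2 + p 0 * w 2 + w 1 * p 3 + p 1 * w 3) / r
        - 2 * (p 0 * p 2 + p 1 * p 3) * (p 0 * w 0 + p 1 * w 1) / r ^ 3 := by
    intro w
    rw [hPφeq, HasFDerivAt.fderiv (f := fun q : Fin 4 → ℝ => 2 * (q 0 * q 2 + q 1 * q 3) * (Aφ q)⁻¹) hPφ]
    simp only [ContinuousLinearMap.add_apply, ContinuousLinearMap.sub_apply, ContinuousLinearMap.smul_apply, ContinuousLinearMap.neg_apply, ContinuousLinearMap.smulRight_apply, ContinuousLinearMap.proj_apply, smul_eq_mul, pow_one, hAφp]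
    field_simp
    ring
  -- derivative of Pβ
  have hPβ : HasFDerivAt Pβ
      ((2 : ℝ) • ((p 0 • (ContinuousLinearMap.proj 3 : (Fin 4 → ℝ) →L[ℝ] ℝ)
          + p 3 • (ContinuousLinearMap.proj 0 : (Fin 4 → ℝ) →L[ℝ] ℝ))
        - (p 1 • (ContinuousLinearMap.proj 2 : (Fin 4 → ℝ) →L[ℝ] ℝ)
          + p 2 • (ContinuousLinearMap.proj 1 : (Fin 4 → ℝ) →L[ℝ] ℝ)))) p :=
    ((h0.mul h3).sub (h1.mul h2)).const_mul 2
  have hPβval : ∀ w : Fin 4 → ℝ, fderiv ℝ Pβ p w =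
      2 * (w 0 * p 3 + p 0 * w 3 - w 1 * p 2 - p 1 * w 2) := by
    intro w
    rw [hPβ.fderiv]
    simp only [ContinuousLinearMap.add_apply, ContinuousLinearMap.sub_apply, ContinuousLinearMap.smul_apply, ContinuousLinearMap.neg_apply, ContinuousLinearMap.smulRight_apply, ContinuousLinearMap.proj_apply, smul_eq_mul, pow_one, hAφp]
    ring
  -- derivative of β
  have hβp := hβ.self_of_nhds
  have hcosβ : Real.cos (β p) = -p 1 / r := hβp.1.trans (by rw [hAφp])
  have hsinβ : Real.sin (β p) = p 0 / r := hβp.2.trans (by rw [hAφp])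
  -- derivative of the comparison functions −q1/Aφ and q0/Aφ
  have hF1 : HasFDerivAt (fun q : Fin 4 → ℝ => -q 1 / Aφ q)
      (((-(ContinuousLinearMap.proj 1 : (Fin 4 → ℝ) →L[ℝ] ℝ))).smulRight ((Aφ p)⁻¹)
        + (-p 1) • ((-(r ^ 2)⁻¹) • ((1 / (2 * r)) •
          ((2 * p 0 ^ 1) • (ContinuousLinearMap.proj 0 : (Fin 4 → ℝ) →L[ℝ] ℝ)
            + (2 * p 1 ^ 1) • (ContinuousLinearMap.proj 1 : (Fin 4 → ℝ) →L[ℝ] ℝ))))) p := by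
    have hneg : HasFDerivAt (fun q : Fin 4 → ℝ => -q 1)
        (-(ContinuousLinearMap.proj 1 : (Fin 4 → ℝ) →L[ℝ] ℝ)) p := h1.neg
    have this : HasFDerivAt (fun q : Fin 4 → ℝ => -q 1 * (Aφ q)⁻¹) (_ : (Fin 4 → ℝ) →L[ℝ] ℝ) p := hneg.mul hInv
    have heq : (fun q : Fin 4 → ℝ => -q 1 / Aφ q)
        = fun q => -q 1 * (Aφ q)⁻¹ := by funext q; rw [div_eq_mul_inv]
    rw [heq]
    refine this.congr_fderiv ?_
    ext w
    simp only [ContinuousLinearMap.add_apply, ContinuousLinearMap.sub_apply, ContinuousLinearMap.smul_apply, ContinuousLinearMap.neg_apply, ContinuousLinearMap.smulRight_apply, ContinuousLinearMap.proj_apply, smul_eq_mul, pow_one, hAφp]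
    ring
  have hF2 : HasFDerivAt (fun q : Fin 4 → ℝ => q 0 / Aφ q)
      (((ContinuousLinearMap.proj 0 : (Fin 4 → ℝ) →L[ℝ] ℝ)).smulRight ((Aφ p)⁻¹)
        + p 0 • ((-(r ^ 2)⁻¹) • ((1 / (2 * r)) •
          ((2 * p 0 ^ 1) • (ContinuousLinearMap.proj 0 : (Fin 4 → ℝ) →L[ℝ] ℝ)
            + (2 * p 1 ^ 1) • (ContinuousLinearMap.proj 1 : (Fin 4 → ℝ) →L[ℝ] ℝ))))) p := by
    have this : HasFDerivAt (fun q : Fin 4 → ℝ => q 0 * (Aφ q)⁻¹) (_ : (Fin 4 → ℝ) →L[ℝ] ℝ) p := h0.mul hInv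
    have heq : (fun q : Fin 4 → ℝ => q 0 / Aφ q)
        = fun q => q 0 * (Aφ q)⁻¹ := by funext q; rw [div_eq_mul_inv]
    rw [heq]
    refine this.congr_fderiv ?_
    ext w
    simp only [ContinuousLinearMap.add_apply, ContinuousLinearMap.sub_apply, ContinuousLinearMap.smul_apply, ContinuousLinearMap.neg_apply, ContinuousLinearMap.smulRight_apply, ContinuousLinearMap.proj_apply, smul_eq_mul, pow_one, hAφp]
    ring
  -- chain rule for cos ∘ β and sin ∘ β, and comparison with hβ
  have hcosD : HasFDerivAt (fun q => Real.cos (β q))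
      ((-Real.sin (β p)) • fderiv ℝ β p) p :=
    (Real.hasDerivAt_cos (β p)).comp_hasFDerivAt p hβd.hasFDerivAt
  have hsinD : HasFDerivAt (fun q => Real.sin (β q))
      ((Real.cos (β p)) • fderiv ℝ β p) p :=
    (Real.hasDerivAt_sin (β p)).comp_hasFDerivAt p hβd.hasFDerivAt
  have hc : fderiv ℝ (fun q => Real.cos (β q)) p = fderiv ℝ (fun q => -q 1 / Aφ q) p :=
    Filter.EventuallyEq.fderiv_eq (hβ.mono fun q hq => hq.1)
  have hs : fderiv ℝ (fun q => Real.sin (β q)) p = fderiv ℝ (fun q => q 0 / Aφ q) p :=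
    Filter.EventuallyEq.fderiv_eq (hβ.mono fun q hq => hq.2)
  have hβval : ∀ w : Fin 4 → ℝ, fderiv ℝ β p w = (p 0 * w 1 - p 1 * w 0) / r ^ 2 := by
    intro w
    have e1 : (-Real.sin (β p)) * fderiv ℝ β p w
        = -(w 1) * r⁻¹ + (-p 1) * (-(r ^ 2)⁻¹ * ((1 / (2 * r))
            * (2 * p 0 ^ 1 * w 0 + 2 * p 1 ^ 1 * w 1))) := by
      have := DFunLike.congr_fun (hcosD.fderiv.symm.trans (hc.trans hF1.fderiv)) w
      simpa only [ContinuousLinearMap.add_apply, ContinuousLinearMap.smul_apply, ContinuousLinearMap.neg_apply, ContinuousLinearMap.smulRight_apply, ContinuousLinearMap.proj_apply, smul_eq_mul, pow_one, hAφp] using this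
    have e2 : (Real.cos (β p)) * fderiv ℝ β p w
        = w 0 * r⁻¹ + p 0 * (-(r ^ 2)⁻¹ * ((1 / (2 * r))
            * (2 * p 0 ^ 1 * w 0 + 2 * p 1 ^ 1 * w 1))) := by
      have := DFunLike.congr_fun (hsinD.fderiv.symm.trans (hs.trans hF2.fderiv)) w
      simpa only [ContinuousLinearMap.add_apply, ContinuousLinearMap.smul_apply, ContinuousLinearMap.neg_apply, ContinuousLinearMap.smulRight_apply, ContinuousLinearMap.proj_apply, smul_eq_mul, pow_one, hAφp] using this
    rw [hsinβ] at e1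
    rw [hcosβ] at e2
    field_simp at e1 e2
    have hB2 : fderiv ℝ β p w * (2 * r ^ 4) * (p 0 ^ 2 + p 1 ^ 2)
        = (p 0 * w 1 - p 1 * w 0) * (2 * r ^ 4) := by
      linear_combination (2 * r ^ 2) * ((-(p 0)) * e1 - p 1 * e2)
    rw [eq_div_iff (pow_ne_zero 2 hrne)]
    have h4 : (2 * r ^ 4 : ℝ) ≠ 0 := by positivity
    apply mul_right_cancel₀ h4
    rw [← hr2] at hB2
    linear_combination hB2
  -- put everything together
  rw [hAval u, hAval v, hPval u, hPval v, hPβval u, hPβval v, hβval u, hβval v]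
  field_simp
  linear_combination ((u 0 * v 2 - v 0 * u 2 + (u 1 * v 3 - v 1 * u 3)) * r ^ 2) * hr2
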